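/- For n = 4, the function h(r) = C₀ + √(C₁)·ln(r + √(r² − C₁)) on (√C₁, ∞), with C₁ > 0, satisfies (h')² = C₁/(r² − C₁), and hence the rotationally symmetric graph of h over ℝ⁴ \ B_{√C₁} has identically zero scalar curvature. -/

import Mathlib

open Set

private lemma sqrt_lt_imp {C₁ r : ℝ} (hC₁ : 0 < C₁) (hr : Real.sqrt C₁ < r) :
    0 < r ∧ 0 < r ^ 2 - C₁ := by
  have h0 : 0 < Real.sqrt C₁ := Real.sqrt_pos.mpr hC₁
  have hr0 : 0 < r := h0.trans hr
  have : (Real.sqrt C₁) ^ 2 < r ^ 2 :=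
    pow_lt_pow_left₀ hr (Real.sqrt_nonneg C₁) two_ne_zero
  rw [Real.sq_sqrt hC₁.le] at this
  exact ⟨hr0, by linarith⟩

private lemma hasDerivAt_g {C₀ C₁ r : ℝ} (hC₁ : 0 < C₁) (hr : Real.sqrt C₁ < r) :
    HasDerivAt (fun x => C₀ + Real.sqrt C₁ * Real.log (x + Real.sqrt (x ^ 2 - C₁)))
      (Real.sqrt C₁ / Real.sqrt (r ^ 2 - C₁)) r := by
  obtain ⟨hr0, hs⟩ := sqrt_lt_imp hC₁ hr
  have hsq : 0 < Real.sqrt (r ^ 2 - C₁) := Real.sqrt_pos.mpr hs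
  have h1 : HasDerivAt (fun x : ℝ => x ^ 2 - C₁) (2 * r) r := by
    simpa using ((hasDerivAt_pow 2 r).sub_const C₁)
  have h2 : HasDerivAt (fun x : ℝ => Real.sqrt (x ^ 2 - C₁))
      (r / Real.sqrt (r ^ 2 - C₁)) r := by
    have := (Real.hasDerivAt_sqrt hs.ne').comp r h1
    refine this.congr_deriv ?_
    field_simp
  have h3 : HasDerivAt (fun x : ℝ => x + Real.sqrt (x ^ 2 - C₁))
      (1 + r / Real.sqrt (r ^ 2 - C₁)) r := (hasDerivAt_id r).add h2
  have hne : r + Real.sqrt (r ^ 2 - C₁) ≠ 0 := by positivity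
  have h4 := (h3.log hne).const_mul (Real.sqrt C₁)
  have h5 := h4.const_add C₀
  refine h5.congr_deriv ?_
  have hss : Real.sqrt (r ^ 2 - C₁) ^ 2 = r ^ 2 - C₁ := Real.sq_sqrt hs.le
  field_simp
  nlinarith [hss]

private lemma hasDerivAt_f {C₁ r : ℝ} (hC₁ : 0 < C₁) (hr : Real.sqrt C₁ < r) :
    HasDerivAt (fun x => Real.sqrt C₁ / Real.sqrt (x ^ 2 - C₁))
      (-(Real.sqrt C₁ * r) / (Real.sqrt (r ^ 2 - C₁) * (r ^ 2 - C₁))) r := by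
  obtain ⟨hr0, hs⟩ := sqrt_lt_imp hC₁ hr
  have hsq : 0 < Real.sqrt (r ^ 2 - C₁) := Real.sqrt_pos.mpr hs
  have h1 : HasDerivAt (fun x : ℝ => x ^ 2 - C₁) (2 * r) r := by
    simpa using ((hasDerivAt_pow 2 r).sub_const C₁)
  have h2 : HasDerivAt (fun x : ℝ => Real.sqrt (x ^ 2 - C₁))
      (r / Real.sqrt (r ^ 2 - C₁)) r := by
    have := (Real.hasDerivAt_sqrt hs.ne').comp r h1
    refine this.congr_deriv ?_
    field_simp
  have h3 := (h2.inv hsq.ne').const_mul (Real.sqrt C₁)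
  have heq : ∀ x : ℝ, Real.sqrt C₁ / Real.sqrt (x ^ 2 - C₁)
      = Real.sqrt C₁ * (Real.sqrt (x ^ 2 - C₁))⁻¹ := fun x => div_eq_mul_inv _ _
  simp only [heq]
  refine h3.congr_deriv ?_
  have hss : Real.sqrt (r ^ 2 - C₁) ^ 2 = r ^ 2 - C₁ := Real.sq_sqrt hs.le
  field_simp
  rw [hss]

theorem schwarzschild_graph_dim4 (C₀ C₁ : ℝ) (hC₁ : 0 < C₁)
    (h : ℝ → ℝ)
    (hdef : ∀ r ∈ Ioi (Real.sqrt C₁),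
      h r = C₀ + Real.sqrt C₁ * Real.log (r + Real.sqrt (r ^ 2 - C₁))) :
    (∀ r ∈ Ioi (Real.sqrt C₁), (deriv h r) ^ 2 = C₁ / (r ^ 2 - C₁))
    ∧ (∀ r ∈ Ioi (Real.sqrt C₁),
        2 * (3 * deriv (deriv h) r * deriv h r / (r * (1 + (deriv h r) ^ 2) ^ 2)
          + 3 * (deriv h r) ^ 2 / (r ^ 2 * (1 + (deriv h r) ^ 2))) = 0) := by
  have hd1 : ∀ r ∈ Ioi (Real.sqrt C₁),
      deriv h r = Real.sqrt C₁ / Real.sqrt (r ^ 2 - C₁) := by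
    intro r hr
    have heq : h =ᶠ[nhds r] fun x => C₀ + Real.sqrt C₁ * Real.log (x + Real.sqrt (x ^ 2 - C₁)) :=
      Filter.eventually_of_mem (isOpen_Ioi.mem_nhds hr) hdef
    rw [heq.deriv_eq]
    exact (hasDerivAt_g hC₁ hr).deriv
  have hd2 : ∀ r ∈ Ioi (Real.sqrt C₁),
      deriv (deriv h) r = -(Real.sqrt C₁ * r) / (Real.sqrt (r ^ 2 - C₁) * (r ^ 2 - C₁)) := by
    intro r hr
    have heq : deriv h =ᶠ[nhds r] fun x => Real.sqrt C₁ / Real.sqrt (x ^ 2 - C₁) :=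
      Filter.eventually_of_mem (isOpen_Ioi.mem_nhds hr) hd1
    rw [heq.deriv_eq]
    exact (hasDerivAt_f hC₁ hr).deriv
  have key : ∀ r ∈ Ioi (Real.sqrt C₁), (deriv h r) ^ 2 = C₁ / (r ^ 2 - C₁) := by
    intro r hr
    obtain ⟨hr0, hs⟩ := sqrt_lt_imp hC₁ (by exact hr)
    rw [hd1 r hr, div_pow, Real.sq_sqrt hC₁.le, Real.sq_sqrt hs.le]
  refine ⟨key, fun r hr => ?_⟩
  obtain ⟨hr0, hs⟩ := sqrt_lt_imp hC₁ (by exact hr)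
  have hsq : 0 < Real.sqrt (r ^ 2 - C₁) := Real.sqrt_pos.mpr hs
  have hss : Real.sqrt (r ^ 2 - C₁) ^ 2 = r ^ 2 - C₁ := Real.sq_sqrt hs.le
  have h1p : 1 + (deriv h r) ^ 2 = r ^ 2 / (r ^ 2 - C₁) := by
    rw [key r hr]; field_simp; ring
  rw [hd2 r hr, h1p, hd1 r hr]
  have hC : Real.sqrt C₁ ^ 2 = C₁ := Real.sq_sqrt hC₁.le
  field_simp
  ring_nf
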